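/- In the RP chain with p = 0, suppose the configuration S has exactly one defector-run (a maximal set of cyclically consecutive vertices in state false), of length k with 1 ≤ k ≤ n−1. Then after one step of the chain the configuration again has exactly one defector-run; its length is k+1 with probability 2/n and k with probability 1 − 2/n. -/

import Mathlib

open scoped Classical

/-- A configuration of the `n`-cycle: `true` = cooperate, `false` = defect. -/
abbrev Config (n : ℕ) := ZMod n → Bool

/-- Probability that, when the edge `{i, i+1}` is selected for play, the
Rational Pavlov update turns configuration `S` into configuration `T`. -/
noncomputable def rpUpdProb (p : ℝ) {n : ℕ} (S : Config n) (i : ZMod n) (T : Config n) : ℝ :=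
  if S i = true ∧ S (i + 1) = true then
    (if T = S then 1 else 0)
  else if S i = false ∧ S (i + 1) = false then
    (if ∀ j : ZMod n, j ≠ i → j ≠ i + 1 → T j = S j then
      (if T i = true then p else 1 - p) * (if T (i + 1) = true then p else 1 - p)
    else 0)
  else
    (if T = Function.update (Function.update S i false) (i + 1) false then 1 else 0)

/-- One-step transition probability of the Rational Pavlov chain on the `n`-cycle:
an edge `{i, i+1}` is chosen uniformly at random and the two players update. -/
noncomputable def rpStepProb (p : ℝ) {n : ℕ} [NeZero n] (S T : Config n) : ℝ :=
  (1 / (n : ℝ)) * ∑ i : ZMod n, rpUpdProb p S i T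

/-- Probability that the Rational Pavlov chain started at `S0`, run for `t` steps,
produces a trajectory `σ : Fin (t+1) → Config n` satisfying the event `E`. -/
noncomputable def rpTrajProb (p : ℝ) {n : ℕ} [NeZero n] (S0 : Config n) (t : ℕ)
    (E : (Fin (t + 1) → Config n) → Prop) : ℝ :=
  ∑ σ : Fin (t + 1) → Config n,
    (if σ 0 = S0 ∧ E σ then ∏ s : Fin t, rpStepProb p (σ s.castSucc) (σ s.succ) else 0)

/-- `S` has exactly one defector-run, of length `k`: for some starting vertex `i`,
the vertices `i, i+1, …, i+k-1` are in state `false` and all other vertices are `true`. -/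
def hasExactlyOneDefectorRun {n : ℕ} (S : Config n) (k : ℕ) : Prop :=
  ∃ i : ZMod n, ∀ m : ℕ, m < n → (S (i + (m : ZMod n)) = false ↔ m < k)

lemma natCast_val_self {n : ℕ} [NeZero n] (x : ZMod n) : ((x.val : ℕ) : ZMod n) = x := by
  simp [ZMod.natCast_val, ZMod.cast_id]

lemma cast_inj_of_lt {n : ℕ} [NeZero n] {x y : ℕ} (hx : x < n) (hy : y < n)
    (h : (x : ZMod n) = y) : x = y := by
  have := congrArg ZMod.val h
  rwa [ZMod.val_cast_of_lt hx, ZMod.val_cast_of_lt hy] at this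

lemma run_card {n : ℕ} [NeZero n] {S : Config n} {k : ℕ} (hk : k ≤ n)
    (h : hasExactlyOneDefectorRun S k) :
    (Finset.univ.filter fun j => S j = false).card = k := by
  obtain ⟨i, hi⟩ := h
  have himg : (Finset.univ.filter fun j => S j = false)
      = (Finset.range k).image (fun m : ℕ => i + (m : ZMod n)) := by
    ext j
    simp only [Finset.mem_filter, Finset.mem_univ, true_and, Finset.mem_image, Finset.mem_range]
    have hvlt : (j - i).val < n := ZMod.val_lt _
    have hj' : i + (((j - i).val : ℕ) : ZMod n) = j := by rw [natCast_val_self]; ring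
    constructor
    · intro hjf
      exact ⟨(j - i).val, (hi _ hvlt).mp (by rw [hj']; exact hjf), hj'⟩
    · rintro ⟨m, hm, rfl⟩
      exact (hi m (lt_of_lt_of_le hm hk)).mpr hm
  rw [himg, Finset.card_image_of_injOn, Finset.card_range]
  intro x hx y hy hxy
  simp only [Finset.coe_range, Set.mem_Iio] at hx hy
  exact cast_inj_of_lt (lt_of_lt_of_le hx hk) (lt_of_lt_of_le hy hk) (add_left_cancel hxy)

lemma upd_eq {n : ℕ} {S : Config n} {i : ZMod n} (h : S i = S (i + 1)) (T : Config n) :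
    rpUpdProb 0 S i T = if T = S then 1 else 0 := by
  unfold rpUpdProb
  by_cases hv : S i = true
  · have hv2 : S (i + 1) = true := h ▸ hv
    rw [if_pos ⟨hv, hv2⟩]
  · have hv' : S i = false := by simpa using hv
    have hv2 : S (i + 1) = false := h ▸ hv'
    rw [if_neg (by simp [hv']), if_pos ⟨hv', hv2⟩]
    by_cases hT : T = S
    · subst hT
      simp [hv', hv2]
    · rw [if_neg hT]
      by_cases hall : ∀ j : ZMod n, j ≠ i → j ≠ i + 1 → T j = S j
      · rw [if_pos hall]
        have hor : T i = true ∨ T (i + 1) = true := by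
          by_contra hcon
          push_neg at hcon
          obtain ⟨hc1, hc2⟩ := hcon
          have hc1' : T i = false := by simpa using hc1
          have hc2' : T (i + 1) = false := by simpa using hc2
          apply hT
          funext j
          by_cases hji : j = i
          · subst hji; rw [hc1', hv']
          · by_cases hji1 : j = i + 1
            · subst hji1; rw [hc2', hv2]
            · exact hall j hji hji1
        rcases hor with h' | h' <;> simp [h']
      · rw [if_neg hall]

lemma upd_ne {n : ℕ} {S : Config n} {i : ZMod n} (h : S i ≠ S (i + 1)) (T : Config n) :
    rpUpdProb 0 S i T
      = if T = Function.update (Function.update S i false) (i + 1) false then 1 else 0 := by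
  unfold rpUpdProb
  rw [if_neg (fun hc => h (hc.1.trans hc.2.symm)), if_neg (fun hc => h (hc.1.trans hc.2.symm))]

lemma ite_irrel {α : Sort*} (c : Prop) (i1 i2 : Decidable c) (a b : α) :
    @ite α c i1 a b = @ite α c i2 a b := by
  cases Subsingleton.elim i1 i2
  rfl

/-- **One step of the `p = 0` chain from a single defector-run.**
If `S` has exactly one defector-run, of length `k` with `1 ≤ k ≤ n-1`, then after one step
the configuration again has exactly one defector-run; its length is `k+1` with probability
`2/n` and `k` with probability `1 - 2/n`. -/
theorem rp_one_run_step (n : ℕ) [NeZero n] (hn : 3 ≤ n) (S : Config n) (k : ℕ)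
    (hk1 : 1 ≤ k) (hk2 : k ≤ n - 1) (hS : hasExactlyOneDefectorRun S k) :
    (∀ S' : Config n, rpStepProb 0 S S' ≠ 0 →
        hasExactlyOneDefectorRun S' k ∨ hasExactlyOneDefectorRun S' (k + 1)) ∧
      (∑ S' : Config n,
          if hasExactlyOneDefectorRun S' (k + 1) then rpStepProb 0 S S' else 0) = 2 / n ∧
      (∑ S' : Config n,
          if hasExactlyOneDefectorRun S' k then rpStepProb 0 S S' else 0) = 1 - 2 / n := by
  obtain ⟨a, ha⟩ := id hS
  have hn0 : (n : ℝ) ≠ 0 := by positivity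
  have hkn : k < n := by omega
  have hk1n : k + 1 ≤ n := by omega
  -- the cast of n-1 is -1
  have hcn1 : ((n - 1 : ℕ) : ZMod n) = -1 := by
    have h0 : ((n - 1 : ℕ) : ZMod n) + ((1 : ℕ) : ZMod n) = ((n : ℕ) : ZMod n) := by
      rw [← Nat.cast_add]
      congr 1
      omega
    rw [ZMod.natCast_self, Nat.cast_one] at h0
    linear_combination h0
  set b₁ : ZMod n := a - 1 with hb1
  set b₂ : ZMod n := a + ((k - 1 : ℕ) : ZMod n) with hb2
  have hb1a : b₁ + 1 = a := by rw [hb1]; ring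
  have hb2a : b₂ + 1 = a + ((k : ℕ) : ZMod n) := by
    rw [hb2, show (k : ℕ) = (k - 1) + 1 from (Nat.sub_add_cancel hk1).symm]
    push_cast
    ring
  have hb1' : b₁ = a + ((n - 1 : ℕ) : ZMod n) := by rw [hb1, hcn1]; ring
  -- values of S on key vertices
  have hS_a : S a = false := by
    have := ha 0 (by omega)
    simp only [Nat.cast_zero, add_zero] at this
    exact this.mpr (by omega)
  have hS_b1 : S b₁ = true := by
    have h1 := ha (n - 1) (by omega)
    rw [← hb1'] at h1
    have h2 : ¬ S b₁ = false := by rw [h1]; omega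
    cases hb : S b₁
    · exact absurd hb h2
    · rfl
  have hS_b2 : S b₂ = false := by
    have := ha (k - 1) (by omega)
    rw [← hb2] at this
    exact this.mpr (by omega)
  have hS_b2' : S (b₂ + 1) = true := by
    have h1 := ha k hkn
    rw [← hb2a] at h1
    have h2 : ¬ S (b₂ + 1) = false := by rw [h1]; omega
    cases hb : S (b₂ + 1)
    · exact absurd hb h2
    · rfl
  have hne1 : S b₁ ≠ S (b₁ + 1) := by rw [hb1a, hS_b1, hS_a]; simp
  have hne2 : S b₂ ≠ S (b₂ + 1) := by rw [hS_b2, hS_b2']; simp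
  have hb12 : b₁ ≠ b₂ := by
    intro hc
    rw [hb1', hb2] at hc
    have := cast_inj_of_lt (x := n - 1) (y := k - 1) (by omega) (by omega) (add_left_cancel hc)
    omega
  -- edges away from the boundary don't change anything
  have heq : ∀ i : ZMod n, i ≠ b₁ → i ≠ b₂ → S i = S (i + 1) := by
    intro i h1 h2
    set m : ℕ := (i - a).val with hm
    have hmn : m < n := ZMod.val_lt _
    have him : i = a + (m : ZMod n) := by rw [hm, natCast_val_self]; ring
    have hm1 : m ≠ n - 1 := fun hc => h1 (by rw [him, hc, ← hb1'])
    have hm2 : m ≠ k - 1 := fun hc => h2 (by rw [him, hc, ← hb2])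
    have e1 := ha m hmn
    rw [← him] at e1
    have e2 := ha (m + 1) (by omega)
    have hstepm : a + ((m + 1 : ℕ) : ZMod n) = i + 1 := by rw [him]; push_cast; ring
    rw [hstepm] at e2
    have hiff : (S i = false) ↔ (S (i + 1) = false) := by rw [e1, e2]; omega
    cases hsi : S i <;> cases hsi1 : S (i + 1)
    · rfl
    · exfalso; rw [hsi, hsi1] at hiff; simp at hiff
    · exfalso; rw [hsi, hsi1] at hiff; simp at hiff
    · rfl
  -- the two possible new configurations
  set T1 : Config n := Function.update (Function.update S b₁ false) (b₁ + 1) false with hT1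
  set T2 : Config n := Function.update (Function.update S b₂ false) (b₂ + 1) false with hT2
  haveI : Fact (1 < n) := ⟨by omega⟩
  have hrunT1 : hasExactlyOneDefectorRun T1 (k + 1) := by
    refine ⟨b₁, fun m hm => ?_⟩
    rw [hT1, Function.update_apply, Function.update_apply]
    by_cases h0 : m = 0
    · subst h0
      simp only [Nat.cast_zero, add_zero]
      rw [if_neg (show ¬(b₁ = b₁ + 1) by simp)]
      simp
    · by_cases h1 : m = 1
      · subst h1
        rw [if_pos (by push_cast; ring)]
        simp; omega
      · have hc1 : b₁ + (m : ZMod n) ≠ b₁ + 1 := by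
          intro hc
          have : (m : ZMod n) = ((1 : ℕ) : ZMod n) := by push_cast; exact add_left_cancel hc
          exact h1 (cast_inj_of_lt hm (by omega) this)
        have hc0 : b₁ + (m : ZMod n) ≠ b₁ := by
          intro hc
          have : (m : ZMod n) = ((0 : ℕ) : ZMod n) := by
            push_cast
            have := add_left_cancel (a := b₁) (by rw [hc, add_zero] : b₁ + (m : ZMod n) = b₁ + 0)
            exact this
          exact h0 (cast_inj_of_lt hm (by omega) this)
        rw [if_neg hc1, if_neg hc0]
        have hrw : b₁ + (m : ZMod n) = a + ((m - 1 : ℕ) : ZMod n) := by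
          rw [hb1, show m = (m - 1) + 1 by omega]
          push_cast
          ring
        rw [hrw, ha (m - 1) (by omega)]
        omega
  have hrunT2 : hasExactlyOneDefectorRun T2 (k + 1) := by
    refine ⟨a, fun m hm => ?_⟩
    rw [hT2, Function.update_apply, Function.update_apply]
    by_cases hmk : m = k
    · subst hmk
      rw [if_pos (by rw [hb2a])]
      simp
    · have hc1 : a + (m : ZMod n) ≠ b₂ + 1 := by
        rw [hb2a]
        intro hc
        exact hmk (cast_inj_of_lt hm hkn (add_left_cancel hc))
      by_cases hmk1 : m = k - 1
      · subst hmk1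
        rw [if_neg hc1, if_pos (by rw [hb2])]
        simp
      · have hc0 : a + (m : ZMod n) ≠ b₂ := by
          rw [hb2]
          intro hc
          exact hmk1 (cast_inj_of_lt hm (by omega) (add_left_cancel hc))
        rw [if_neg hc1, if_neg hc0, ha m hm]
        omega
  -- run lengths are distinct
  have hPS : ¬ hasExactlyOneDefectorRun S (k + 1) := by
    intro h
    have c1 := run_card (le_of_lt hkn) hS
    have c2 := run_card hk1n h
    omega
  have hQT1 : ¬ hasExactlyOneDefectorRun T1 k := by
    intro h
    have c1 := run_card (le_of_lt hkn) h
    have c2 := run_card hk1n hrunT1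
    omega
  have hQT2 : ¬ hasExactlyOneDefectorRun T2 k := by
    intro h
    have c1 := run_card (le_of_lt hkn) h
    have c2 := run_card hk1n hrunT2
    omega
  -- pointwise formula for the update probability
  have hupd : ∀ (T : Config n) (i : ZMod n), rpUpdProb 0 S i T
      = if i = b₁ then (if T = T1 then (1 : ℝ) else 0)
        else if i = b₂ then (if T = T2 then (1 : ℝ) else 0)
        else (if T = S then (1 : ℝ) else 0) := by
    intro T i
    by_cases h1 : i = b₁
    · rw [h1, if_pos rfl, upd_ne hne1, ← hT1]
      exact ite_irrel _ _ _ _ _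
    · rw [if_neg h1]
      by_cases h2 : i = b₂
      · rw [h2, if_pos rfl, upd_ne hne2, ← hT2]
        exact ite_irrel _ _ _ _ _
      · rw [if_neg h2, upd_eq (heq i h1 h2)]
        exact ite_irrel _ _ _ _ _
  -- the step probability formula
  have hstep : ∀ T : Config n, rpStepProb 0 S T
      = ((n : ℝ) - 2) / n * (if T = S then 1 else 0)
        + 1 / n * (if T = T1 then 1 else 0) + 1 / n * (if T = T2 then 1 else 0) := by
    intro T
    have h1 : ∑ i : ZMod n, rpUpdProb 0 S i T =
        ∑ i : ZMod n, ((if T = S then (1 : ℝ) else 0)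
          + (if i = b₁ then (if T = T1 then (1 : ℝ) else 0) - (if T = S then 1 else 0) else 0)
          + (if i = b₂ then (if T = T2 then (1 : ℝ) else 0) - (if T = S then 1 else 0) else 0)) := by
      refine Finset.sum_congr rfl fun i _ => ?_
      rw [hupd T i]
      by_cases e1 : i = b₁
      · have e2 : ¬ i = b₂ := by rw [e1]; exact hb12
        rw [if_pos e1, if_pos e1, if_neg e2]
        ring
      · rw [if_neg e1, if_neg e1]
        by_cases e2 : i = b₂
        · rw [if_pos e2, if_pos e2]; ring
        · rw [if_neg e2, if_neg e2]; ring
    unfold rpStepProb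
    rw [h1, Finset.sum_add_distrib, Finset.sum_add_distrib, Finset.sum_const,
      Finset.sum_ite_eq' Finset.univ b₁, Finset.sum_ite_eq' Finset.univ b₂,
      Finset.card_univ, ZMod.card, if_pos (Finset.mem_univ b₁), if_pos (Finset.mem_univ b₂),
      nsmul_eq_mul]
    generalize (if T = S then (1 : ℝ) else 0) = x
    generalize (if T = T1 then (1 : ℝ) else 0) = y
    generalize (if T = T2 then (1 : ℝ) else 0) = z
    field_simp
    ring
  -- component sums
  have comp : ∀ (c : ℝ) (X : Config n) (l : ℕ),
      (∑ T : Config n, if hasExactlyOneDefectorRun T l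
          then c * (if T = X then (1 : ℝ) else 0) else 0)
        = if hasExactlyOneDefectorRun X l then c else 0 := by
    intro c X l
    rw [Finset.sum_eq_single X]
    · by_cases hP : hasExactlyOneDefectorRun X l <;> simp [hP]
    · intro b _ hb
      by_cases hP : hasExactlyOneDefectorRun b l <;> simp [hP, hb]
    · intro h
      exact absurd (Finset.mem_univ X) h
  have expand : ∀ l : ℕ,
      (∑ S' : Config n, if hasExactlyOneDefectorRun S' l then rpStepProb 0 S S' else 0)
      = (if hasExactlyOneDefectorRun S l then ((n : ℝ) - 2) / n else 0)
        + (if hasExactlyOneDefectorRun T1 l then (1 : ℝ) / n else 0)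
        + (if hasExactlyOneDefectorRun T2 l then (1 : ℝ) / n else 0) := by
    intro l
    have hsplit : (∑ S' : Config n, if hasExactlyOneDefectorRun S' l then rpStepProb 0 S S' else 0)
        = ∑ S' : Config n,
          ((if hasExactlyOneDefectorRun S' l
              then ((n : ℝ) - 2) / n * (if S' = S then (1 : ℝ) else 0) else 0)
            + (if hasExactlyOneDefectorRun S' l
              then 1 / n * (if S' = T1 then (1 : ℝ) else 0) else 0)
            + (if hasExactlyOneDefectorRun S' l
              then 1 / n * (if S' = T2 then (1 : ℝ) else 0) else 0)) := by
      refine Finset.sum_congr rfl fun S' _ => ?_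
      rw [hstep S']
      by_cases hP : hasExactlyOneDefectorRun S' l <;> simp [hP]
    rw [hsplit, Finset.sum_add_distrib, Finset.sum_add_distrib, comp, comp, comp]
  refine ⟨?_, ?_, ?_⟩
  · intro S' hne
    by_cases e0 : S' = S
    · exact Or.inl (e0 ▸ hS)
    by_cases e1 : S' = T1
    · exact Or.inr (e1 ▸ hrunT1)
    by_cases e2 : S' = T2
    · exact Or.inr (e2 ▸ hrunT2)
    rw [hstep S', if_neg e0, if_neg e1, if_neg e2] at hne
    simp at hne
  · rw [expand (k + 1), if_neg hPS, if_pos hrunT1, if_pos hrunT2]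
    ring
  · rw [expand k, if_pos hS, if_neg hQT1, if_neg hQT2]
    field_simp
    ring
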